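/- Let β > 1 be a real number. Then every word w with B̄(w) < β belongs to W(β), and every word w ∈ W(β) satisfies B̄(w) ≤ β. -/

import Mathlib

/-- The shift map iterated `k` times: `(shift k w) i = w (i + k)`,
so `shift k w = w_k w_{k+1} w_{k+2} …`. -/
def shift (k : ℕ) (w : ℕ → ℕ) : ℕ → ℕ := fun i => w (i + k)

/-- Strict lexicographic order on infinite words: `v < w` iff there is an index `i`
with `v j = w j` for all `j < i` and `v i < w i`. -/
def LexLt (v w : ℕ → ℕ) : Prop := ∃ i, (∀ j < i, v j = w j) ∧ v i < w i

/-- Weak lexicographic order: `v ≤ w` iff `v < w` or `v = w`. -/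
def LexLe (v w : ℕ → ℕ) : Prop := LexLt v w ∨ v = w

/-- A word is a bounded sequence of natural numbers. -/
def IsWord (w : ℕ → ℕ) : Prop := ∃ M, ∀ i, w i ≤ M

/-- `fword w β = ∑_{i ≥ 0} w_i β^{-(i+1)} = w_0/β + w_1/β² + …`. -/
noncomputable def fword (w : ℕ → ℕ) (β : ℝ) : ℝ := ∑' i : ℕ, (w i : ℝ) / β ^ (i + 1)

open Classical in
/-- `B̂(w)`: zero for the zero word, and otherwise `inf {β > 1 : f_w(β) ≤ 1}`. -/
noncomputable def Bhat (w : ℕ → ℕ) : ℝ :=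
  if w = fun _ => 0 then 0 else sInf {β : ℝ | 1 < β ∧ fword w β ≤ 1}

/-- `B̄(w) = sup_{j ≥ 0} B̂(σ^j w)`. -/
noncomputable def Bbar (w : ℕ → ℕ) : ℝ := ⨆ j : ℕ, Bhat (shift j w)

/-- The sequence `A_i` in the β-expansion of `β`: `A_0 = β`, `A_{i+1} = β (A_i - ⌊A_i⌋)`. -/
noncomputable def betaA (β : ℝ) : ℕ → ℝ
  | 0 => β
  | i + 1 => β * (betaA β i - (⌊betaA β i⌋₊ : ℝ))

/-- The β-expansion of `β`: the word `a` with `a_i = ⌊A_i⌋`. -/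
noncomputable def betaExp (β : ℝ) : ℕ → ℕ := fun i => ⌊betaA β i⌋₊

/-- The domain `W(β)` of the β-shift: all words `w` with `σ^k w < a` lexicographically
for every `k ≥ 0`, where `a` is the β-expansion of `β`. -/
def Wset (β : ℝ) : Set (ℕ → ℕ) :=
  {w | IsWord w ∧ ∀ k : ℕ, LexLt (shift k w) (betaExp β)}

/-- `π` is a permutation of `{1, …, n}` (viewed as a map `ℕ → ℕ`). -/
def IsPerm (n : ℕ) (π : ℕ → ℕ) : Prop := Set.BijOn π (Set.Icc 1 n) (Set.Icc 1 n)

/-- The word `w` induces the permutation `π` of `{1, …, n}`: for all `1 ≤ i, j ≤ n`,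
`π(i) < π(j)` iff `σ^{i-1} w < σ^{j-1} w` lexicographically. -/
def Induces (n : ℕ) (w : ℕ → ℕ) (π : ℕ → ℕ) : Prop :=
  ∀ i ∈ Set.Icc 1 n, ∀ j ∈ Set.Icc 1 n,
    (π i < π j ↔ LexLt (shift (i - 1) w) (shift (j - 1) w))

/-- `π ∈ Al(Σ_β)`: some word in `W(β)` induces `π`. -/
def Allowed (β : ℝ) (n : ℕ) (π : ℕ → ℕ) : Prop := ∃ w ∈ Wset β, Induces n w π

/-- The shift-complexity `B(π) = inf {β > 1 : π ∈ Al(Σ_β)}`. -/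
noncomputable def Bperm (n : ℕ) (π : ℕ → ℕ) : ℝ :=
  sInf {β : ℝ | 1 < β ∧ Allowed β n π}

/-- `ρ_m` is the permutation `1 m 2 (m-1) 3 (m-2) …` of `{1, …, m}`:
`ρ(2i-1) = i` and `ρ(2i) = m+1-i`. -/
def IsRho (m : ℕ) (ρ : ℕ → ℕ) : Prop :=
  IsPerm m ρ ∧ (∀ i, 1 ≤ i → 2 * i - 1 ≤ m → ρ (2 * i - 1) = i) ∧
    (∀ i, 1 ≤ i → 2 * i ≤ m → ρ (2 * i) = m + 1 - i)



lemma betaA_nonneg {β : ℝ} (hβ : 1 < β) : ∀ n, 0 ≤ betaA β n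
  | 0 => by simpa [betaA] using le_of_lt (lt_trans one_pos hβ)
  | n + 1 => by
    have h := betaA_nonneg hβ n
    have : (⌊betaA β n⌋₊ : ℝ) ≤ betaA β n := Nat.floor_le h
    have : 0 ≤ betaA β n - (⌊betaA β n⌋₊ : ℝ) := by linarith
    simp only [betaA]
    positivity

lemma betaA_le {β : ℝ} (hβ : 1 < β) : ∀ n, betaA β n ≤ β
  | 0 => le_refl _
  | n + 1 => by
    have h := betaA_nonneg hβ n
    have h2 : betaA β n < (⌊betaA β n⌋₊ : ℝ) + 1 := Nat.lt_floor_add_one _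
    have h3 : betaA β n - (⌊betaA β n⌋₊ : ℝ) ≤ 1 := by linarith
    have hb0 : 0 ≤ β := by linarith
    calc betaA β (n+1) = β * (betaA β n - (⌊betaA β n⌋₊ : ℝ)) := rfl
      _ ≤ β * 1 := by
          apply mul_le_mul_of_nonneg_left h3 hb0
      _ = β := mul_one β

lemma betaExp_zero_pos {β : ℝ} (hβ : 1 < β) : 1 ≤ betaExp β 0 := by
  have : (1:ℕ) ≤ ⌊β⌋₊ := Nat.le_floor (by simpa using hβ.le)
  simpa [betaExp, betaA] using this

lemma betaA_identity {β : ℝ} (hβ : 1 < β) :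
    ∀ n, ∑ j ∈ Finset.range n, (betaExp β j : ℝ) / β ^ (j+1) + betaA β n / β ^ (n+1) = 1
  | 0 => by
    have hb : β ≠ 0 := by positivity
    simp [betaA, hb]
  | n + 1 => by
    have hb : (β:ℝ) ≠ 0 := by positivity
    have ih := betaA_identity hβ n
    rw [Finset.sum_range_succ]
    have key : (betaExp β n : ℝ) / β ^ (n+1) + betaA β (n+1) / β ^ (n+2) = betaA β n / β ^ (n+1) := by
      have : betaA β (n+1) = β * (betaA β n - (⌊betaA β n⌋₊ : ℝ)) := rfl
      rw [this]
      field_simp [betaExp]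
      simp only [betaExp]
      ring
    linarith [ih, key]

lemma summable_word {v : ℕ → ℕ} {γ : ℝ} (hv : IsWord v) (hγ : 1 < γ) :
    Summable (fun i : ℕ => (v i : ℝ) / γ ^ (i + 1)) := by
  obtain ⟨M, hM⟩ := hv
  have hγ0 : (0:ℝ) < γ := lt_trans one_pos hγ
  have hr0 : (0:ℝ) ≤ 1/γ := by positivity
  have hr1 : 1/γ < 1 := by rw [div_lt_one hγ0]; exact hγ
  have hg : Summable (fun i : ℕ => (M:ℝ) * (1/γ) ^ (i+1)) := by
    apply Summable.mul_left
    have := summable_geometric_of_lt_one hr0 hr1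
    exact ((this.mul_left (1/γ)).congr (fun i => by rw [pow_succ]; ring))
  apply Summable.of_nonneg_of_le (fun i => by positivity) _ hg
  intro i
  calc (v i:ℝ)/γ^(i+1) ≤ (M:ℝ)/γ^(i+1) := by gcongr; exact_mod_cast hM i
    _ = (M:ℝ)*(1/γ)^(i+1) := by rw [div_pow, one_pow]; ring

lemma IsWord.shift {v : ℕ → ℕ} (hv : IsWord v) (k : ℕ) : IsWord (shift k v) := by
  obtain ⟨M, hM⟩ := hv; exact ⟨M, fun i => hM _⟩

lemma shift_shift (k j : ℕ) (v : ℕ → ℕ) : shift k (shift j v) = shift (k + j) v := by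
  funext i; simp [shift, Nat.add_assoc]

lemma fword_nonneg {v : ℕ → ℕ} {γ : ℝ} (hγ : 0 < γ) : 0 ≤ fword v γ :=
  tsum_nonneg (fun i => by positivity)

lemma fword_anti {v : ℕ → ℕ} {γ γ' : ℝ} (hv : IsWord v) (hγ : 1 < γ) (h : γ ≤ γ') :
    fword v γ' ≤ fword v γ := by
  have hγ' : 1 < γ' := lt_of_lt_of_le hγ h
  apply Summable.tsum_le_tsum _ (summable_word hv hγ') (summable_word hv hγ)
  intro i
  apply div_le_div_of_nonneg_left (by positivity) (by positivity)
  exact pow_le_pow_left₀ (by linarith) h _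

lemma sum_le_fword {v : ℕ → ℕ} {γ : ℝ} (hv : IsWord v) (hγ : 1 < γ) (n : ℕ) :
    ∑ j ∈ Finset.range n, (v j : ℝ) / γ ^ (j+1) ≤ fword v γ :=
  Summable.sum_le_tsum _ (fun i _ => by positivity) (summable_word hv hγ)

lemma fword_le_geom {v : ℕ → ℕ} {M : ℕ} (hM : ∀ i, v i ≤ M) {γ : ℝ} (hγ : 1 < γ) :
    fword v γ ≤ M / (γ - 1) := by
  have hγ0 : (0:ℝ) < γ := lt_trans one_pos hγ
  have hr0 : (0:ℝ) ≤ 1/γ := by positivity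
  have hr1 : 1/γ < 1 := by rw [div_lt_one hγ0]; exact hγ
  have hsum : Summable (fun i : ℕ => (M:ℝ) * (1/γ) ^ (i+1)) := by
    apply Summable.mul_left
    exact (((summable_geometric_of_lt_one hr0 hr1).mul_left (1/γ)).congr
      (fun i => by rw [pow_succ]; ring))
  have h1 : fword v γ ≤ ∑' i : ℕ, (M:ℝ) * (1/γ) ^ (i+1) := by
    apply Summable.tsum_le_tsum _ (summable_word ⟨M, hM⟩ hγ) hsum
    intro i
    calc (v i:ℝ)/γ^(i+1) ≤ (M:ℝ)/γ^(i+1) := by gcongr; exact_mod_cast hM i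
      _ = (M:ℝ)*(1/γ)^(i+1) := by rw [div_pow, one_pow]; ring
  refine h1.trans ?_
  have : ∑' i : ℕ, (M:ℝ) * (1/γ) ^ (i+1) = M * ((1/γ) * (1 - 1/γ)⁻¹) := by
    rw [tsum_mul_left]
    congr 1
    rw [tsum_eq_tsum_of_hasSum_iff_hasSum (fun {a} => Iff.rfl)]
    calc ∑' i : ℕ, (1/γ:ℝ)^(i+1) = ∑' i : ℕ, (1/γ) * (1/γ)^i := by
          simp [pow_succ, mul_comm]
      _ = (1/γ) * ∑' i : ℕ, (1/γ)^i := tsum_mul_left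
      _ = (1/γ) * (1 - 1/γ)⁻¹ := by rw [tsum_geometric_of_lt_one hr0 hr1]
  rw [this]
  have h2 : (1/γ:ℝ) * (1 - 1/γ)⁻¹ = 1/(γ-1) := by
    rw [eq_div_iff (by linarith : γ - (1:ℝ) ≠ 0)]
    field_simp
    rw [div_self (by linarith : γ - (1:ℝ) ≠ 0)]
  rw [h2, mul_one_div]

lemma fword_le_one_large {v : ℕ → ℕ} {M : ℕ} (hM : ∀ i, v i ≤ M) :
    fword v ((M:ℝ) + 2) ≤ 1 := by
  have h : (1:ℝ) < (M:ℝ) + 2 := by have := Nat.cast_nonneg (α:=ℝ) M; linarith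
  calc fword v ((M:ℝ)+2) ≤ (M:ℝ) / ((M:ℝ)+2-1) := fword_le_geom hM (by have := Nat.cast_nonneg (α:=ℝ) M; linarith)
    _ ≤ 1 := by
        rw [div_le_one (by have := Nat.cast_nonneg (α:=ℝ) M; linarith)]
        linarith

lemma Bhat_le {v : ℕ → ℕ} {γ : ℝ} (h1 : 1 < γ) (h2 : fword v γ ≤ 1) : Bhat v ≤ γ := by
  unfold Bhat
  split
  · linarith
  · refine csInf_le ?_ ⟨h1, h2⟩
    exact ⟨1, fun x hx => hx.1.le⟩

lemma Bhat_le_bound {v : ℕ → ℕ} {M : ℕ} (hM : ∀ i, v i ≤ M) : Bhat v ≤ (M:ℝ) + 2 :=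
  Bhat_le (by have := Nat.cast_nonneg (α:=ℝ) M; linarith) (fword_le_one_large hM)

lemma fword_le_one_of_Bhat_lt {v : ℕ → ℕ} {γ : ℝ} (hv : IsWord v) (h1 : 1 < γ)
    (h : Bhat v < γ) : fword v γ ≤ 1 := by
  by_cases h0 : v = fun _ => 0
  · subst h0
    simp [fword]
  · obtain ⟨M, hM⟩ := hv
    have hne : {β : ℝ | 1 < β ∧ fword v β ≤ 1}.Nonempty :=
      ⟨(M:ℝ)+2, by have := Nat.cast_nonneg (α:=ℝ) M; linarith, fword_le_one_large hM⟩
    rw [Bhat, if_neg h0] at h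
    obtain ⟨γ', hγ', hlt⟩ := exists_lt_of_csInf_lt hne h
    exact le_trans (fword_anti ⟨M, hM⟩ hγ'.1 hlt.le) hγ'.2

lemma fword_split {v : ℕ → ℕ} {γ : ℝ} (hv : IsWord v) (hγ : 1 < γ) (n : ℕ) :
    fword v γ = ∑ j ∈ Finset.range n, (v j : ℝ) / γ ^ (j+1)
      + (fword (shift n v) γ) / γ ^ n := by
  have hs := summable_word hv hγ
  have h := Summable.sum_add_tsum_nat_add (f := fun i => (v i : ℝ) / γ ^ (i+1)) n hs
  rw [fword, ← h]
  congr 1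
  rw [fword, div_eq_mul_one_div, ← tsum_mul_right]
  congr 1
  funext i
  have hγ0 : (0:ℝ) < γ := lt_trans one_pos hγ
  rw [shift]
  rw [div_mul_div_comm, mul_one]
  congr 1
  rw [← pow_add]
  congr 1
  ring

lemma lex_trichotomy (v w : ℕ → ℕ) : LexLt v w ∨ v = w ∨ LexLt w v := by
  by_cases h : v = w
  · exact Or.inr (Or.inl h)
  · have hne : ∃ i, v i ≠ w i := by
      by_contra hc
      push_neg at hc
      exact h (funext hc)
    classical
    let i := Nat.find hne
    have hi : v i ≠ w i := Nat.find_spec hne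
    have hj : ∀ j < i, v j = w j := fun j hj => by
      by_contra hc
      have := Nat.find_min' hne hc
      omega
    rcases lt_or_gt_of_ne hi with hlt | hgt
    · exact Or.inl ⟨i, hj, hlt⟩
    · exact Or.inr (Or.inr ⟨i, fun j hij => (hj j hij).symm, hgt⟩)

lemma IsWord.betaExp {β : ℝ} (hβ : 1 < β) : IsWord (betaExp β) :=
  ⟨⌊β⌋₊, fun i => Nat.floor_le_floor (betaA_le hβ i)⟩

lemma fword_le_one_of_mem {β : ℝ} (hβ : 1 < β) {w : ℕ → ℕ} (hw : w ∈ Wset β) (j : ℕ) :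
    fword (shift j w) β ≤ 1 := by
  obtain ⟨⟨M, hM⟩, hlex⟩ := hw
  have hword : IsWord w := ⟨M, hM⟩
  set C := ⨆ k : ℕ, fword (shift k w) β with hC
  have hbdd : BddAbove (Set.range fun k => fword (shift k w) β) := by
    refine ⟨(M:ℝ)/(β-1), ?_⟩
    rintro x ⟨k, rfl⟩
    exact fword_le_geom (fun i => hM _) hβ
  have hCk : ∀ k, fword (shift k w) β ≤ C := fun k => le_ciSup hbdd k
  have hC1 : C ≤ 1 := by
    by_contra hc
    push_neg at hc
    have hkey : ∀ k, fword (shift k w) β ≤ 1 + (C-1)/β := by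
      intro k
      obtain ⟨i, hagree, hlt⟩ := hlex k
      have hp : (0:ℝ) < β ^ (i+1) := by positivity
      have hsplit := fword_split (hword.shift k) hβ (i+1)
      rw [shift_shift] at hsplit
      have hsum : ∑ j ∈ Finset.range (i+1), ((shift k w) j : ℝ) / β ^ (j+1)
          = ∑ j ∈ Finset.range i, (betaExp β j : ℝ) / β ^ (j+1)
            + ((shift k w) i : ℝ)/β^(i+1) := by
        rw [Finset.sum_range_succ]
        congr 1
        exact Finset.sum_congr rfl fun x hx => by
          rw [hagree x (Finset.mem_range.mp hx)]
      have hvi : ((shift k w) i : ℝ) ≤ (betaExp β i : ℝ) - 1 := by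
        have h' : ((shift k w) i : ℝ) + 1 ≤ (betaExp β i : ℝ) := by exact_mod_cast hlt
        linarith
      have hid := betaA_identity hβ (i+1)
      rw [Finset.sum_range_succ] at hid
      have hA : 0 ≤ betaA β (i+1) := betaA_nonneg hβ (i+1)
      have hAq : 0 ≤ betaA β (i+1) / β ^ (i+1+1) := by positivity
      have hT : fword (shift (i+1+k) w) β ≤ C := hCk _
      have ht1 : ((shift k w) i : ℝ)/β^(i+1) ≤ ((betaExp β i : ℝ) - 1)/β^(i+1) := by
        gcongr
      have ht2 : fword (shift (i+1+k) w) β / β^(i+1) ≤ C / β^(i+1) := by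
        gcongr
      have e1 : ((betaExp β i : ℝ) - 1)/β^(i+1)
          = (betaExp β i : ℝ)/β^(i+1) - 1/β^(i+1) := by ring
      have e2 : C/β^(i+1) = (C-1)/β^(i+1) + 1/β^(i+1) := by ring
      have ht3 : (C-1)/β^(i+1) ≤ (C-1)/β := by
        apply div_le_div_of_nonneg_left (by linarith) (by linarith)
        calc β = β^1 := (pow_one β).symm
          _ ≤ β^(i+1) := pow_le_pow_right₀ hβ.le (by omega)
      linarith [hsplit, hsum, hid]
    have hCle : C ≤ 1 + (C-1)/β := ciSup_le hkey
    have : (C-1)/β < C-1 := div_lt_self (by linarith) hβ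
    linarith
  exact (hCk j).trans hC1

/-- Let `β > 1`. Then every word `w` with `B̄(w) < β` belongs to `W(β)`,
and every word `w ∈ W(β)` satisfies `B̄(w) ≤ β`. -/
theorem stmt_11 (β : ℝ) (hβ : 1 < β) :
    (∀ w : ℕ → ℕ, IsWord w → Bbar w < β → w ∈ Wset β) ∧
      (∀ w ∈ Wset β, Bbar w ≤ β) := by
  constructor
  · intro w hword hb
    refine ⟨hword, fun k => ?_⟩
    obtain ⟨M, hM⟩ := hword
    have hword : IsWord w := ⟨M, hM⟩
    set m := max 1 (Bbar w) with hm
    have hmβ : m < β := max_lt hβ hb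
    set γ := (m + β)/2 with hγdef
    have hγm : m < γ := by rw [hγdef]; linarith
    have hγβ : γ < β := by rw [hγdef]; linarith
    have hγ1 : 1 < γ := lt_of_le_of_lt (le_max_left 1 (Bbar w)) hγm
    have hγ0 : (0:ℝ) < γ := by linarith
    have hβ0 : (0:ℝ) < β := by linarith
    have hbdd : BddAbove (Set.range fun j => Bhat (shift j w)) :=
      ⟨(M:ℝ)+2, by rintro x ⟨j, rfl⟩; exact Bhat_le_bound (fun i => hM _)⟩
    have hf : ∀ j, fword (shift j w) γ ≤ 1 := by
      intro j
      apply fword_le_one_of_Bhat_lt (hword.shift j) hγ1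
      exact lt_of_le_of_lt ((le_ciSup hbdd j).trans (le_max_right 1 (Bbar w))) hγm
    rcases lex_trichotomy (shift k w) (betaExp β) with h | h | h
    · exact h
    · exfalso
      have hfk := hf k
      rw [h] at hfk
      have hε : 0 < 1 - γ/β := by
        have : γ/β < 1 := (div_lt_one hβ0).mpr hγβ
        linarith
      obtain ⟨n, hn⟩ := exists_pow_lt_of_lt_one hε
        (show 1/β < 1 by rw [div_lt_one hβ0]; exact hβ)
      have hWa : IsWord (betaExp β) := IsWord.betaExp hβ
      have h1 : ∑ j ∈ Finset.range n, (betaExp β j : ℝ)/γ^(j+1) ≤ fword (betaExp β) γ :=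
        sum_le_fword hWa hγ1 n
      have h2 : ∀ j ∈ Finset.range n,
          (betaExp β j : ℝ)/β^(j+1) * (β/γ) ≤ (betaExp β j : ℝ)/γ^(j+1) := by
        intro j _
        have hpw : γ^j ≤ β^j := pow_le_pow_left₀ hγ0.le hγβ.le j
        rw [div_mul_div_comm, div_le_div_iff₀ (by positivity) (by positivity),
          pow_succ, pow_succ]
        have h0 : (0:ℝ) ≤ (betaExp β j : ℝ) * β * γ := by positivity
        nlinarith [mul_le_mul_of_nonneg_left hpw h0]
      have h3 : (∑ j ∈ Finset.range n, (betaExp β j : ℝ)/β^(j+1)) * (β/γ)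
          ≤ ∑ j ∈ Finset.range n, (betaExp β j : ℝ)/γ^(j+1) := by
        rw [Finset.sum_mul]
        exact Finset.sum_le_sum h2
      have hidn := betaA_identity hβ n
      have hAn' : betaA β n / β^(n+1) ≤ (1/β)^n := by
        rw [div_pow, one_pow, div_le_div_iff₀ (by positivity) (by positivity), pow_succ]
        nlinarith [betaA_le hβ n, pow_pos hβ0 n, pow_nonneg hβ0.le n]
      have hSβ1 : γ/β < ∑ j ∈ Finset.range n, (betaExp β j : ℝ)/β^(j+1) := by
        linarith
      have hr : (0:ℝ) < β/γ := by positivity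
      have hmul : (γ/β)*(β/γ) < (∑ j ∈ Finset.range n, (betaExp β j : ℝ)/β^(j+1))*(β/γ) :=
        mul_lt_mul_of_pos_right hSβ1 hr
      have hone : (γ/β)*(β/γ) = 1 := by field_simp
      linarith
    · exfalso
      obtain ⟨i, hagree, hlt⟩ := h
      have hfk := hf k
      have hpart : ∑ j ∈ Finset.range (i+1), ((shift k w) j : ℝ)/γ^(j+1)
          ≤ fword (shift k w) γ := sum_le_fword (hword.shift k) hγ1 (i+1)
      have hsum : ∑ j ∈ Finset.range (i+1), ((shift k w) j : ℝ)/γ^(j+1)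
          = ∑ j ∈ Finset.range i, (betaExp β j : ℝ)/γ^(j+1)
            + ((shift k w) i : ℝ)/γ^(i+1) := by
        rw [Finset.sum_range_succ]
        congr 1
        exact Finset.sum_congr rfl fun x hx => by
          rw [← hagree x (Finset.mem_range.mp hx)]
      have hvi : (betaExp β i : ℝ) + 1 ≤ ((shift k w) i : ℝ) := by exact_mod_cast hlt
      have hdiv : ((betaExp β i : ℝ)+1)/γ^(i+1) ≤ ((shift k w) i : ℝ)/γ^(i+1) := by
        gcongr
      have edist : ((betaExp β i : ℝ)+1)/γ^(i+1)
          = (betaExp β i : ℝ)/γ^(i+1) + 1/γ^(i+1) := by ring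
      have eγ : ∑ j ∈ Finset.range (i+1), (betaExp β j : ℝ)/γ^(j+1)
          = ∑ j ∈ Finset.range i, (betaExp β j : ℝ)/γ^(j+1)
            + (betaExp β i : ℝ)/γ^(i+1) := Finset.sum_range_succ _ _
      have hsums : ∑ j ∈ Finset.range (i+1), (betaExp β j : ℝ)/β^(j+1)
          ≤ ∑ j ∈ Finset.range (i+1), (betaExp β j : ℝ)/γ^(j+1) := by
        apply Finset.sum_le_sum
        intro j _
        gcongr
      have hid := betaA_identity hβ (i+1)
      have hA2 : betaA β (i+1) / β^(i+1+1) ≤ 1/β^(i+1) := by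
        rw [div_le_div_iff₀ (by positivity) (by positivity)]
        calc betaA β (i+1) * β^(i+1) ≤ β * β^(i+1) :=
              mul_le_mul_of_nonneg_right (betaA_le hβ (i+1)) (by positivity)
          _ = 1 * β^(i+1+1) := by rw [pow_succ]; ring
      have hgb : 1/β^(i+1) < 1/γ^(i+1) := by
        apply one_div_lt_one_div_of_lt (by positivity)
        exact pow_lt_pow_left₀ hγβ hγ0.le (Nat.succ_ne_zero i)
      linarith
  · intro w hw
    apply ciSup_le
    intro j
    exact Bhat_le hβ (fword_le_one_of_mem hβ hw j)
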